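/- For n ≥ 3, a permutation of {1,...,n} lies in the images of two distinct maps among f_before, f_after, f_end, f_bump (applied to B-avoiding permutations of {1,...,n-1}) if and only if its last two values are {1,2} (in either order); moreover no permutation lies in the images of both f_before and f_after, nor of both f_end and f_bump. -/

import Mathlib

/-- `l` is a permutation of `{1, ..., n}`, viewed as the sequence of its values. -/
def IsPermOf (l : List ℕ) (n : ℕ) : Prop := l.Perm (List.range' 1 n)

/-- `l` is B-avoiding: there are no indices `a < b < c < d` with
`max {l a, l c} < min {l b, l d}`. -/
def BAvoid (l : List ℕ) : Prop :=
  ∀ a b c d : Fin l.length, a < b → b < c → c < d →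
    ¬ (max (l.get a) (l.get c) < min (l.get b) (l.get d))

/-- increase all values by 1 and insert `1` immediately before the value `2`. -/
def fBefore (σ : List ℕ) : List ℕ :=
  ((σ.map (· + 1)).take ((σ.map (· + 1)).idxOf 2)) ++
    1 :: ((σ.map (· + 1)).drop ((σ.map (· + 1)).idxOf 2))

/-- increase all values by 1 and insert `1` immediately after the value `2`. -/
def fAfter (σ : List ℕ) : List ℕ :=
  ((σ.map (· + 1)).take ((σ.map (· + 1)).idxOf 2 + 1)) ++
    1 :: ((σ.map (· + 1)).drop ((σ.map (· + 1)).idxOf 2 + 1))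

/-- increase all values by 1 and append `1` at the end. -/
def fEnd (σ : List ℕ) : List ℕ := σ.map (· + 1) ++ [1]

/-- increase all values by 1, replace the value `2` by `1`, and append `2` at the end. -/
def fBump (σ : List ℕ) : List ℕ :=
  (σ.map (· + 1)).map (fun x => if x = 2 then 1 else x) ++ [2]

/-- `π` lies in the image of the `i`-th of the four maps applied to
B-avoiding permutations of `{1, ..., n-1}`. -/
def InImage (n : ℕ) (i : Fin 4) (π : List ℕ) : Prop :=
  ∃ σ : List ℕ, IsPermOf σ (n - 1) ∧ BAvoid σ ∧ ![fBefore, fAfter, fEnd, fBump] i σ = π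

lemma indexOf_append_cons (A B : List ℕ) (x : ℕ) (hx : x ∉ A) :
    (A ++ x :: B).idxOf x = A.length := by
  induction A with
  | nil => simp
  | cons a A ih =>
    simp only [List.mem_cons, not_or] at hx
    simp [List.idxOf_cons, hx.1, ih hx.2, Ne.symm hx.1]

lemma pos_eq (A B C D : List ℕ) (x : ℕ) (hnd : (A ++ x :: B).Nodup)
    (h : A ++ x :: B = C ++ x :: D) : A.length = C.length := by
  have hA : x ∉ A := by
    rcases List.nodup_append'.mp hnd with ⟨-, -, hd⟩
    exact fun hx => hd hx List.mem_cons_self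
  have hC : x ∉ C := by
    rw [h] at hnd
    rcases List.nodup_append'.mp hnd with ⟨-, -, hd⟩
    exact fun hx => hd hx List.mem_cons_self
  have := indexOf_append_cons A B x hA
  rw [h, indexOf_append_cons C D x hC] at this
  omega

lemma map_sub_range' (s m : ℕ) : (List.range' (s+1) m).map (· - 1) = List.range' s m := by
  induction m generalizing s with
  | zero => simp
  | succ m ih => rw [List.range'_succ, List.range'_succ, List.map_cons, ih (s+1)]; simp

lemma bavoid_delete (xs zs : List ℕ) (y : ℕ) (h : BAvoid (xs ++ y :: zs)) :
    BAvoid (xs ++ zs) := by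
  intro a b c d hab hbc hcd hviol
  set f : ℕ → ℕ := fun k => if k < xs.length then k else k + 1 with hf
  have hlen : ∀ k : Fin (xs ++ zs).length, f k < (xs ++ y :: zs).length := by
    intro k
    have := k.isLt
    simp only [List.length_append, List.length_cons] at this ⊢
    simp only [hf]; split <;> omega
  have hget : ∀ k : Fin (xs ++ zs).length,
      (xs ++ zs).get k = (xs ++ y :: zs).get ⟨f k, hlen k⟩ := by
    intro k
    have hk := k.isLt
    simp only [List.length_append] at hk
    simp only [List.get_eq_getElem, hf]
    split
    · next h' => rw [List.getElem_append_left h', List.getElem_append_left h']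
    · next h' =>
      push_neg at h'
      rw [List.getElem_append_right h', List.getElem_append_right (by omega)]
      have he : (k:ℕ) + 1 - xs.length = (k - xs.length) + 1 := by omega
      simp only [he, List.getElem_cons_succ]
  have hmono : ∀ i j : ℕ, i < j → f i < f j := by
    intro i j hij
    simp only [hf]; split <;> split <;> omega
  exact h ⟨f a, hlen a⟩ ⟨f b, hlen b⟩ ⟨f c, hlen c⟩ ⟨f d, hlen d⟩
    (hmono _ _ hab) (hmono _ _ hbc) (hmono _ _ hcd)
    (by rw [← hget a, ← hget b, ← hget c, ← hget d]; exact hviol)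

lemma bavoid_map_sub (l : List ℕ) (hl : ∀ x ∈ l, 2 ≤ x) (h : BAvoid l) :
    BAvoid (l.map (· - 1)) := by
  intro a b c d hab hbc hcd hviol
  have hlen : (l.map (· - 1)).length = l.length := by simp
  have hget : ∀ k : Fin (l.map (· - 1)).length,
      (l.map (· - 1)).get k = l[(k : ℕ)]'(hlen ▸ k.isLt) - 1 := by
    intro k; simp
  have hia : (a:ℕ) < l.length := by rw [← hlen]; exact a.isLt
  have hib : (b:ℕ) < l.length := by rw [← hlen]; exact b.isLt
  have hic : (c:ℕ) < l.length := by rw [← hlen]; exact c.isLt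
  have hid : (d:ℕ) < l.length := by rw [← hlen]; exact d.isLt
  refine h ⟨a, hia⟩ ⟨b, hib⟩ ⟨c, hic⟩ ⟨d, hid⟩ hab hbc hcd ?_
  rw [hget a, hget b, hget c, hget d] at hviol
  have ha2 := hl _ (l.getElem_mem hia)
  have hb2 := hl _ (l.getElem_mem hib)
  have hc2 := hl _ (l.getElem_mem hic)
  have hd2 := hl _ (l.getElem_mem hid)
  simp only [lt_min_iff, max_lt_iff, List.get_eq_getElem] at hviol ⊢
  omega

lemma st0 {n : ℕ} (hn : 3 ≤ n) {π : List ℕ} (h : InImage n 0 π) :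
    ∃ A B, π = A ++ 1 :: 2 :: B := by
  obtain ⟨σ, hσp, -, hσ⟩ := h
  simp only [Matrix.cons_val_zero] at hσ
  have h1 : (1:ℕ) ∈ σ := hσp.mem_iff.mpr (List.mem_range'_1.mpr ⟨le_refl _, by omega⟩)
  have h2 : (2:ℕ) ∈ σ.map (· + 1) := List.mem_map.mpr ⟨1, h1, rfl⟩
  have hidx : (σ.map (· + 1)).idxOf 2 < (σ.map (· + 1)).length := List.idxOf_lt_length_iff.mpr h2
  refine ⟨(σ.map (· + 1)).take ((σ.map (· + 1)).idxOf 2), (σ.map (· + 1)).drop ((σ.map (· + 1)).idxOf 2 + 1), ?_⟩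
  rw [← hσ]
  unfold fBefore
  rw [List.drop_eq_getElem_cons hidx, List.getElem_idxOf hidx]

lemma st1 {n : ℕ} (hn : 3 ≤ n) {π : List ℕ} (h : InImage n 1 π) :
    ∃ A B, π = A ++ 2 :: 1 :: B := by
  obtain ⟨σ, hσp, -, hσ⟩ := h
  simp only [Matrix.cons_val_one, Matrix.head_cons, Matrix.cons_val_zero] at hσ
  have h1 : (1:ℕ) ∈ σ := hσp.mem_iff.mpr (List.mem_range'_1.mpr ⟨le_refl _, by omega⟩)
  have h2 : (2:ℕ) ∈ σ.map (· + 1) := List.mem_map.mpr ⟨1, h1, rfl⟩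
  have hidx : (σ.map (· + 1)).idxOf 2 < (σ.map (· + 1)).length := List.idxOf_lt_length_iff.mpr h2
  refine ⟨(σ.map (· + 1)).take ((σ.map (· + 1)).idxOf 2), (σ.map (· + 1)).drop ((σ.map (· + 1)).idxOf 2 + 1), ?_⟩
  rw [← hσ]
  unfold fAfter
  rw [List.take_succ]
  rw [List.getElem?_eq_getElem hidx, List.getElem_idxOf hidx]
  simp

lemma st2 {n : ℕ} {π : List ℕ} (h : InImage n 2 π) : ∃ A, π = A ++ [1] := by
  obtain ⟨σ, -, -, hσ⟩ := h
  exact ⟨σ.map (· + 1), by rw [← hσ]; rfl⟩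

lemma st3 {n : ℕ} {π : List ℕ} (h : InImage n 3 π) : ∃ A, π = A ++ [2] := by
  obtain ⟨σ, -, -, hσ⟩ := h
  exact ⟨(σ.map (· + 1)).map (fun x => if x = 2 then 1 else x), by rw [← hσ]; rfl⟩

lemma range'_one_eq (n : ℕ) (h : 1 ≤ n) :
    List.range' 1 n = 1 :: List.range' 2 (n-1) := by
  obtain ⟨m, rfl⟩ := Nat.exists_eq_add_of_le h
  rw [Nat.add_comm, List.range'_succ]
  simp

lemma sigma_props (n : ℕ) (hn : 3 ≤ n) (π l : List ℕ) (hπ : IsPermOf π n) (hB : BAvoid π)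
    (hd : π = l ++ [1, 2] ∨ π = l ++ [2, 1]) :
    IsPermOf ((l ++ [2]).map (· - 1)) (n - 1) ∧ BAvoid ((l ++ [2]).map (· - 1)) ∧
    ((l ++ [2]).map (· - 1)).map (· + 1) = l ++ [2] ∧ 2 ∉ l := by
  have hnd : π.Nodup := hπ.symm.nodup List.nodup_range'
  have hmem : ∀ x ∈ π, 1 ≤ x := fun x hx => (List.mem_range'_1.mp (hπ.mem_iff.mp hx)).1
  have hdisj : l.Disjoint [1, 2] ∧ (π = l ++ [1,2] ∨ π = l ++ [2,1]) := by
    rcases hd with hd | hd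
    · rw [hd] at hnd
      exact ⟨(List.nodup_append'.mp hnd).2.2, Or.inl hd⟩
    · rw [hd] at hnd
      refine ⟨fun a ha hb => (List.nodup_append'.mp hnd).2.2 ha ?_, Or.inr hd⟩
      simp at hb ⊢; tauto
  have h1l : 1 ∉ l := fun h => hdisj.1 h (by simp)
  have h2l : 2 ∉ l := fun h => hdisj.1 h (by simp)
  have hl2 : ∀ x ∈ l ++ [2], 2 ≤ x := by
    intro x hx
    rcases List.mem_append.mp hx with hx | hx
    · have hx' : x ∈ π := by
        rcases hd with hd | hd <;> rw [hd] <;> exact List.mem_append.mpr (Or.inl hx)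
      have := hmem x hx'
      rcases Nat.lt_or_ge x 2 with h | h
      · interval_cases x
        · exact absurd hx h1l
      · exact h
    · simp at hx; omega
  have hperm' : (1 :: (l ++ [2])).Perm π := by
    rcases hd with hd | hd
    · rw [hd]; exact (List.perm_middle (a := 1) (l₁ := l) (l₂ := [2])).symm
    · rw [hd, show l ++ [2,1] = (l ++ [2]) ++ 1 :: [] by simp]
      have := (List.perm_middle (a := 1) (l₁ := l ++ [2]) (l₂ := ([] : List ℕ))).symm
      simpa using this
  have hperm2 : (l ++ [2]).Perm (List.range' 2 (n-1)) := by
    have : (1 :: (l ++ [2])).Perm (1 :: List.range' 2 (n-1)) := by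
      refine (hperm'.trans hπ).trans ?_
      rw [range'_one_eq n (by omega)]
    exact this.cons_inv
  have hBl2 : BAvoid (l ++ [2]) := by
    rcases hd with hd | hd
    · exact bavoid_delete l [2] 1 (by rw [← hd]; exact hB)
    · have := bavoid_delete (l ++ [2]) [] 1
        (by rw [show (l ++ [2]) ++ 1 :: ([]:List ℕ) = l ++ [2,1] by simp, ← hd]; exact hB)
      simpa using this
  refine ⟨?_, bavoid_map_sub _ hl2 hBl2, ?_, h2l⟩
  · have := hperm2.map (· - 1)
    rwa [show List.range' 2 (n-1) = List.range' (1+1) (n-1) from rfl, map_sub_range'] at this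
  · rw [List.map_map]
    nth_rewrite 2 [← List.map_id (l ++ [2])]
    exact List.map_congr_left fun x hx => by have := hl2 x hx; simp; omega

lemma back12 (n : ℕ) (hn : 3 ≤ n) (π l : List ℕ) (hπ : IsPermOf π n) (hB : BAvoid π)
    (hd : π = l ++ [1, 2]) : InImage n 0 π ∧ InImage n 3 π := by
  obtain ⟨hp, hb, hm, h2l⟩ := sigma_props n hn π l hπ hB (Or.inl hd)
  set σ := (l ++ [2]).map (· - 1) with hσ
  have hidx : (σ.map (· + 1)).idxOf 2 = l.length := by
    rw [hm]; exact indexOf_append_cons l [] 2 h2l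
  constructor
  · refine ⟨σ, hp, hb, ?_⟩
    show fBefore σ = π
    unfold fBefore
    rw [hidx, hm, List.take_left, List.drop_left, hd]
  · refine ⟨σ, hp, hb, ?_⟩
    show fBump σ = π
    unfold fBump
    rw [hm, hd]
    have : (l ++ [2]).map (fun x => if x = 2 then 1 else x) = l ++ [1] := by
      rw [List.map_append]
      congr 1
      · nth_rewrite 2 [← List.map_id l]
        exact List.map_congr_left fun x hx => by
          have : x ≠ 2 := fun h => h2l (h ▸ hx)
          simp [this]
    rw [this]
    simp

lemma back21 (n : ℕ) (hn : 3 ≤ n) (π l : List ℕ) (hπ : IsPermOf π n) (hB : BAvoid π)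
    (hd : π = l ++ [2, 1]) : InImage n 1 π ∧ InImage n 2 π := by
  obtain ⟨hp, hb, hm, h2l⟩ := sigma_props n hn π l hπ hB (Or.inr hd)
  set σ := (l ++ [2]).map (· - 1) with hσ
  have hidx : (σ.map (· + 1)).idxOf 2 = l.length := by
    rw [hm]; exact indexOf_append_cons l [] 2 h2l
  constructor
  · refine ⟨σ, hp, hb, ?_⟩
    show fAfter σ = π
    unfold fAfter
    rw [hidx, hm, show l.length + 1 = (l ++ [2]).length by simp,
      List.take_length, List.drop_length, hd]
    simp
  · refine ⟨σ, hp, hb, ?_⟩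
    show fEnd σ = π
    unfold fEnd
    rw [hm, hd]
    simp

theorem stmt10 (n : ℕ) (hn : 3 ≤ n) (π : List ℕ) (hπ : IsPermOf π n) (hB : BAvoid π) :
    ((∃ i j : Fin 4, i ≠ j ∧ InImage n i π ∧ InImage n j π) ↔
      ∃ l : List ℕ, π = l ++ [1, 2] ∨ π = l ++ [2, 1]) ∧
    ¬ (InImage n 0 π ∧ InImage n 1 π) ∧ ¬ (InImage n 2 π ∧ InImage n 3 π) := by
  have hnd : π.Nodup := hπ.symm.nodup List.nodup_range'
  have no01 : ¬ (InImage n 0 π ∧ InImage n 1 π) := by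
    rintro ⟨h0, h1⟩
    obtain ⟨A, B, hAB⟩ := st0 hn h0
    obtain ⟨C, D, hCD⟩ := st1 hn h1
    have e1 : A.length = (C ++ [2]).length :=
      pos_eq A (2::B) (C ++ [2]) D 1 (by rw [← hAB]; exact hnd)
        (by rw [← hAB, hCD]; simp)
    have e2 : (A ++ [1]).length = C.length :=
      pos_eq (A ++ [1]) B C (1::D) 2
        (by rw [show (A ++ [1]) ++ 2::B = A ++ 1::2::B by simp, ← hAB]; exact hnd)
        (by rw [show (A ++ [1]) ++ 2::B = A ++ 1::2::B by simp, ← hAB, hCD])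
    simp at e1 e2
    omega
  have no23 : ¬ (InImage n 2 π ∧ InImage n 3 π) := by
    rintro ⟨h2, h3⟩
    obtain ⟨A, hA⟩ := st2 h2
    obtain ⟨C, hC⟩ := st3 h3
    have he : A ++ [1] = C ++ [2] := by rw [← hA, hC]
    have hl : A.length = C.length := by
      have := congrArg List.length he
      simpa using this
    have := List.append_inj_right he hl
    simp at this
  have c03 : InImage n 0 π → InImage n 3 π → ∃ l, π = l ++ [1,2] ∨ π = l ++ [2,1] := by
    intro h0 h3
    obtain ⟨A, B, hAB⟩ := st0 hn h0
    obtain ⟨C, hC⟩ := st3 h3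
    have e : (A ++ [1]).length = C.length :=
      pos_eq (A ++ [1]) B C [] 2
        (by rw [show (A ++ [1]) ++ 2::B = A ++ 1::2::B by simp, ← hAB]; exact hnd)
        (by rw [show (A ++ [1]) ++ 2::B = A ++ 1::2::B by simp, ← hAB, hC])
    have l1 : π.length = A.length + 2 + B.length := by rw [hAB]; simp; omega
    have l2 : π.length = C.length + 1 := by rw [hC]; simp
    have hB0 : B = [] := List.length_eq_zero_iff.mp (by simp at e; omega)
    exact ⟨A, Or.inl (by rw [hAB, hB0])⟩
  have c12 : InImage n 1 π → InImage n 2 π → ∃ l, π = l ++ [1,2] ∨ π = l ++ [2,1] := by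
    intro h1 h2
    obtain ⟨A, B, hAB⟩ := st1 hn h1
    obtain ⟨C, hC⟩ := st2 h2
    have e : (A ++ [2]).length = C.length :=
      pos_eq (A ++ [2]) B C [] 1
        (by rw [show (A ++ [2]) ++ 1::B = A ++ 2::1::B by simp, ← hAB]; exact hnd)
        (by rw [show (A ++ [2]) ++ 1::B = A ++ 2::1::B by simp, ← hAB, hC])
    have l1 : π.length = A.length + 2 + B.length := by rw [hAB]; simp; omega
    have l2 : π.length = C.length + 1 := by rw [hC]; simp
    have hB0 : B = [] := List.length_eq_zero_iff.mp (by simp at e; omega)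
    exact ⟨A, Or.inr (by rw [hAB, hB0])⟩
  have no02 : ¬ (InImage n 0 π ∧ InImage n 2 π) := by
    rintro ⟨h0, h2⟩
    obtain ⟨A, B, hAB⟩ := st0 hn h0
    obtain ⟨C, hC⟩ := st2 h2
    have e : A.length = C.length :=
      pos_eq A (2::B) C [] 1 (by rw [← hAB]; exact hnd) (by rw [← hAB, hC])
    have l1 : π.length = A.length + 2 + B.length := by rw [hAB]; simp; omega
    have l2 : π.length = C.length + 1 := by rw [hC]; simp
    omega
  have no13 : ¬ (InImage n 1 π ∧ InImage n 3 π) := by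
    rintro ⟨h1, h3⟩
    obtain ⟨A, B, hAB⟩ := st1 hn h1
    obtain ⟨C, hC⟩ := st3 h3
    have e : A.length = C.length :=
      pos_eq A (1::B) C [] 2 (by rw [← hAB]; exact hnd) (by rw [← hAB, hC])
    have l1 : π.length = A.length + 2 + B.length := by rw [hAB]; simp; omega
    have l2 : π.length = C.length + 1 := by rw [hC]; simp
    omega
  refine ⟨⟨?_, ?_⟩, no01, no23⟩
  · rintro ⟨i, j, hij, hi, hj⟩
    fin_cases i <;> fin_cases j
    · exact absurd rfl hij
    · exact absurd ⟨hi, hj⟩ no01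
    · exact absurd ⟨hi, hj⟩ no02
    · exact c03 hi hj
    · exact absurd ⟨hj, hi⟩ no01
    · exact absurd rfl hij
    · exact c12 hi hj
    · exact absurd ⟨hi, hj⟩ no13
    · exact absurd ⟨hj, hi⟩ no02
    · exact c12 hj hi
    · exact absurd rfl hij
    · exact absurd ⟨hi, hj⟩ no23
    · exact c03 hj hi
    · exact absurd ⟨hj, hi⟩ no13
    · exact absurd ⟨hj, hi⟩ no23
    · exact absurd rfl hij
  · rintro ⟨l, hl | hl⟩
    · obtain ⟨h0, h3⟩ := back12 n hn π l hπ hB hl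
      exact ⟨0, 3, by decide, h0, h3⟩
    · obtain ⟨h1, h2⟩ := back21 n hn π l hπ hB hl
      exact ⟨1, 2, by decide, h1, h2⟩
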